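/- Let α_i > 0 (i = 1,…,s) and β > 0, let ℳ = {M_0, M_1, M_2} be any (n+m) × (n+m) matrices with T_ℳ well-defined, and let {v^k} be generated by v^{k+1} = T_ℳ(v^k, v^{k−1}). Then for every k ≥ 1 and every v ∈ ℝ^{n+m}, G(v^{k+1}, v) ≤ ⟨M_1 v^k + M_2 v^{k−1} − M_0 v^{k+1}, v^{k+1} − v⟩ (as an inequality in the extended reals). -/

import Mathlib

open Matrix Filter Topology

noncomputable section

/-- Spectral norm (largest singular value) of a real matrix. -/
def specNorm {p q : Type*} [Fintype p] [Fintype q] [DecidableEq q]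
    (M : Matrix p q ℝ) : ℝ :=
  ‖LinearMap.toContinuousLinearMap (Matrix.toEuclideanLin M)‖

/-- The square root of a positive semidefinite matrix, as defined in the older Mathlib. -/
def Matrix.PosSemidef.sqrt {d : Type*} [Fintype d] [DecidableEq d] {A : Matrix d d ℝ}
    (hA : A.PosSemidef) : Matrix d d ℝ :=
  (hA.1.eigenvectorUnitary : Matrix d d ℝ) *
    diagonal (fun i => ((Real.sqrt (hA.1.eigenvalues i) : ℝ) : ℝ)) *
    (star hA.1.eigenvectorUnitary : Matrix d d ℝ)

/-- Condition-M for a triple of matrices: `M0 = M1 + M2`, `H := M0 + M2` is symmetric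
positive definite, and `‖H^{-1/2} M2 H^{-1/2}‖₂ < 1/2` (here `H^{-1/2}` is the positive
semidefinite square root of `H⁻¹`). -/
def ConditionM {d : Type*} [Fintype d] [DecidableEq d] (M0 M1 M2 : Matrix d d ℝ) : Prop :=
  M0 = M1 + M2 ∧ ∃ hH : (M0 + M2).PosDef,
    specNorm (Matrix.PosSemidef.sqrt hH.inv.posSemidef * M2 *
      Matrix.PosSemidef.sqrt hH.inv.posSemidef) < 1 / 2

/-- The cost functional defining the proximity operator `prox_{φ,H}` at input `x`. -/
def proxCost {ι : Type*} [Fintype ι] (φ : (ι → ℝ) → EReal) (H : Matrix ι ι ℝ)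
    (x u : ι → ℝ) : EReal :=
  ((((1 : ℝ) / 2) * ((u - x) ⬝ᵥ H.mulVec (u - x)) : ℝ) : EReal) + φ u

/-- `p = prox_{φ,H}(x)`: `p` is the unique minimizer of the prox cost. -/
def IsProx {ι : Type*} [Fintype ι] (φ : (ι → ℝ) → EReal) (H : Matrix ι ι ℝ)
    (x p : ι → ℝ) : Prop :=
  (∀ u, proxCost φ H x p ≤ proxCost φ H x u) ∧
  ∀ q, (∀ u, proxCost φ H x q ≤ proxCost φ H x u) → q = p

/-- Proper lower semicontinuous convex extended-real-valued function. -/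
def ProperConvexLsc {ι : Type*} [Fintype ι] (f : (ι → ℝ) → EReal) : Prop :=
  (∃ x, f x ≠ ⊤) ∧ (∀ x, f x ≠ ⊥) ∧ LowerSemicontinuous f ∧
  ∀ x y : ι → ℝ, ∀ t : ℝ, 0 < t → t < 1 →
    f (t • x + (1 - t) • y) ≤ (t : EReal) * f x + ((1 - t : ℝ) : EReal) * f y

/-- Scaling of an extended-real-valued function by a real constant. -/
def smulF {V : Type*} (c : ℝ) (φ : V → EReal) : V → EReal := fun u => (c : EReal) * φ u

/-- The conjugate of the indicator of `C = {b}`: `ι_C*(y) = ⟨y, b⟩`. -/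
def iotaCstar {m : ℕ} (b : Fin m → ℝ) : (Fin m → ℝ) → EReal :=
  fun y => ((y ⬝ᵥ b : ℝ) : EReal)

variable {s m : ℕ} {n : Fin s → ℕ}

/-- Index type for the concatenated variable `x = (x_1, …, x_s)`. -/
abbrev XIdx (n : Fin s → ℕ) := (i : Fin s) × Fin (n i)

/-- Index type for the full variable `v = (x, y)`. -/
abbrev FIdx (n : Fin s → ℕ) (m : ℕ) := XIdx n ⊕ Fin m

/-- The `i`-th block of a concatenated vector. -/
def blk (x : XIdx n → ℝ) (i : Fin s) : Fin (n i) → ℝ := fun j => x ⟨i, j⟩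

/-- The matrix `A = [A_1 … A_s]`. -/
def bigA (A : ∀ i : Fin s, Matrix (Fin m) (Fin (n i)) ℝ) : Matrix (Fin m) (XIdx n) ℝ :=
  Matrix.of fun r p => A p.1 r p.2

/-- The separable objective `∑ f_i(x_i)`. -/
def objSum (f : ∀ i : Fin s, (Fin (n i) → ℝ) → EReal) (x : XIdx n → ℝ) : EReal :=
  ∑ i, f i (blk x i)

/-- `∑ A_i x_i`. -/
def sumAx (A : ∀ i : Fin s, Matrix (Fin m) (Fin (n i)) ℝ) (x : XIdx n → ℝ) : Fin m → ℝ :=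
  ∑ i, (A i).mulVec (blk x i)

/-- `x` is a solution of problem (P). -/
def IsSolution (f : ∀ i : Fin s, (Fin (n i) → ℝ) → EReal)
    (A : ∀ i : Fin s, Matrix (Fin m) (Fin (n i)) ℝ) (b : Fin m → ℝ)
    (x : XIdx n → ℝ) : Prop :=
  sumAx A x = b ∧ ∀ z : XIdx n → ℝ, sumAx A z = b → objSum f x ≤ objSum f z

/-- `b ∈ A(ri(dom(∑ f_i)))` where `ri` is the relative (intrinsic) interior. -/
def RiCond (f : ∀ i : Fin s, (Fin (n i) → ℝ) → EReal)
    (A : ∀ i : Fin s, Matrix (Fin m) (Fin (n i)) ℝ) (b : Fin m → ℝ) : Prop :=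
  b ∈ (fun x => sumAx A x) '' intrinsicInterior ℝ {x : XIdx n → ℝ | objSum f x ≠ ⊤}

/-- The `x`-part of a full vector. -/
def xpart (v : FIdx n m → ℝ) : XIdx n → ℝ := fun p => v (Sum.inl p)

/-- The `y`-part of a full vector. -/
def ypart (v : FIdx n m → ℝ) : Fin m → ℝ := fun r => v (Sum.inr r)

/-- The function `Φ(x_1,…,x_s,y) = ∑ f_i(x_i) + ι_C*(y)`. -/
def PhiFun (f : ∀ i : Fin s, (Fin (n i) → ℝ) → EReal) (b : Fin m → ℝ)
    (v : FIdx n m → ℝ) : EReal :=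
  objSum f (xpart v) + iotaCstar b (ypart v)

/-- The diagonal matrix `R = diag((β/α_1)I, …, (β/α_s)I, (1/β)I)`. -/
def Rmat (α : Fin s → ℝ) (β : ℝ) : Matrix (FIdx n m) (FIdx n m) ℝ :=
  Matrix.diagonal (Sum.elim (fun p : XIdx n => β / α p.1) fun _ => 1 / β)

/-- The inverse `R⁻¹` of the diagonal matrix `R`. -/
def Rinv (α : Fin s → ℝ) (β : ℝ) : Matrix (FIdx n m) (FIdx n m) ℝ :=
  Matrix.diagonal (Sum.elim (fun p : XIdx n => α p.1 / β) fun _ => β)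

/-- The expansive matrix `E = [[I, −P⁻¹Aᵀ],[βA, I]]`. -/
def Emat (A : ∀ i : Fin s, Matrix (Fin m) (Fin (n i)) ℝ) (α : Fin s → ℝ) (β : ℝ) :
    Matrix (FIdx n m) (FIdx n m) ℝ :=
  Matrix.fromBlocks 1 (-(Matrix.diagonal (fun p : XIdx n => α p.1 / β) * (bigA A)ᵀ))
    (β • bigA A) 1

/-- The skew-symmetric matrix `S_A = [[0, −Aᵀ],[A, 0]]`. -/
def SAmat (A : ∀ i : Fin s, Matrix (Fin m) (Fin (n i)) ℝ) :
    Matrix (FIdx n m) (FIdx n m) ℝ :=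
  Matrix.fromBlocks 0 (-(bigA A)ᵀ) (bigA A) 0

/-- `w = 𝒯(v)`, where `𝒯(x_1,…,x_s,y) = (prox_{(α_1/β)f_1}x_1, …, prox_{(α_s/β)f_s}x_s,
prox_{β ι_C*}y)`. -/
def isT (f : ∀ i : Fin s, (Fin (n i) → ℝ) → EReal) (b : Fin m → ℝ)
    (α : Fin s → ℝ) (β : ℝ) (v w : FIdx n m → ℝ) : Prop :=
  (∀ i, IsProx (smulF (α i / β) (f i)) 1 (blk (xpart v) i) (blk (xpart w) i)) ∧
  IsProx (smulF β (iotaCstar b)) 1 (ypart v) (ypart w)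

/-- `w = T_ℳ(u₁, u₂)`, i.e. `w = 𝒯((E − R⁻¹M₀)w + R⁻¹M₁u₁ + R⁻¹M₂u₂)`. -/
def isTM (f : ∀ i : Fin s, (Fin (n i) → ℝ) → EReal)
    (A : ∀ i : Fin s, Matrix (Fin m) (Fin (n i)) ℝ) (b : Fin m → ℝ)
    (α : Fin s → ℝ) (β : ℝ) (M0 M1 M2 : Matrix (FIdx n m) (FIdx n m) ℝ)
    (u1 u2 w : FIdx n m → ℝ) : Prop :=
  isT f b α β ((Emat A α β - Rinv α β * M0).mulVec w + (Rinv α β * M1).mulVec u1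
    + (Rinv α β * M2).mulVec u2) w

/-- `T_ℳ` is well-defined. -/
def TMWellDefined (f : ∀ i : Fin s, (Fin (n i) → ℝ) → EReal)
    (A : ∀ i : Fin s, Matrix (Fin m) (Fin (n i)) ℝ) (b : Fin m → ℝ)
    (α : Fin s → ℝ) (β : ℝ) (M0 M1 M2 : Matrix (FIdx n m) (FIdx n m) ℝ) : Prop :=
  ∀ u1 u2 : FIdx n m → ℝ, ∃! w, isTM f A b α β M0 M1 M2 u1 u2 w


/-- `G(v, v') := Φ(v) − Φ(v') + ⟨v', S_A v⟩`, valued in the extended reals. -/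
def Gfun {s m : ℕ} {n : Fin s → ℕ} (f : ∀ i : Fin s, (Fin (n i) → ℝ) → EReal)
    (A : ∀ i : Fin s, Matrix (Fin m) (Fin (n i)) ℝ) (b : Fin m → ℝ)
    (v v' : FIdx n m → ℝ) : EReal :=
  PhiFun f b v - PhiFun f b v' + ((v' ⬝ᵥ (SAmat A).mulVec v : ℝ) : EReal)

/-! ### Auxiliary lemmas -/

private lemma real_le_of_forall_pos {a b : ℝ} (h : ∀ ε : ℝ, 0 < ε → a ≤ b + ε) : a ≤ b := by
  by_contra hcon
  push_neg at hcon
  have := h ((a - b) / 2) (by linarith)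
  linarith

private lemma ecoe_sum {γ : Type*} (t : Finset γ) (g : γ → ℝ) :
    ((∑ i ∈ t, g i : ℝ) : EReal) = ∑ i ∈ t, ((g i : ℝ) : EReal) :=
  map_sum (⟨⟨Real.toEReal, EReal.coe_zero⟩, EReal.coe_add⟩ : ℝ →+ EReal) g t

private lemma ereal_sum_ne_bot {γ : Type*} (t : Finset γ) (g : γ → EReal) :
    (∀ i ∈ t, g i ≠ ⊥) → ∑ i ∈ t, g i ≠ ⊥ := by
  classical
  refine Finset.cons_induction_on t (by simp) fun a u ha ih h => ?_
  rw [Finset.sum_cons]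
  intro hbot
  rcases EReal.add_eq_bot_iff.1 hbot with h1 | h1
  · exact h a (Finset.mem_cons_self a u) h1
  · exact ih (fun i hi => h i (Finset.mem_cons_of_mem hi)) h1

private lemma ereal_sum_eq_top {γ : Type*} (t : Finset γ) (g : γ → EReal)
    (h : ∀ i ∈ t, g i ≠ ⊥) (i0 : γ) (hi0 : i0 ∈ t) (htop : g i0 = ⊤) :
    ∑ i ∈ t, g i = ⊤ := by
  classical
  rw [← Finset.add_sum_erase _ _ hi0, htop]
  exact EReal.top_add_of_ne_bot
    (ereal_sum_ne_bot _ _ fun i hi => h i (Finset.mem_of_mem_erase hi))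

private lemma dot_self_nonneg' {ι : Type*} [Fintype ι] (e : ι → ℝ) : 0 ≤ e ⬝ᵥ e :=
  Finset.sum_nonneg fun j _ => mul_self_nonneg (e j)

/-- Key inequality for the proximity operator of a convex function:
if `p` minimizes `u ↦ ½‖u-x‖² + c f(u)` then
`f p - f u ≤ c⁻¹ ⟨x - p, p - u⟩` for every `u`. -/
private lemma prox_ineq {ι : Type*} [Fintype ι] [DecidableEq ι] (f : (ι → ℝ) → EReal)
    (hprop : ∃ z, f z ≠ ⊤) (hbot : ∀ z, f z ≠ ⊥)
    (hconv : ∀ x y : ι → ℝ, ∀ t : ℝ, 0 < t → t < 1 →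
      f (t • x + (1 - t) • y) ≤ (t : EReal) * f x + ((1 - t : ℝ) : EReal) * f y)
    (c : ℝ) (hc : 0 < c) (x p : ι → ℝ)
    (hmin : ∀ u, proxCost (smulF c f) 1 x p ≤ proxCost (smulF c f) 1 x u) :
    f p ≠ ⊤ ∧ ∀ u, f p - f u ≤ ((c⁻¹ * ((x - p) ⬝ᵥ (p - u)) : ℝ) : EReal) := by
  have hfp : f p ≠ ⊤ := by
    obtain ⟨z, hz⟩ := hprop
    intro hT
    have h1 := hmin z
    have hz' : f z = (((f z).toReal : ℝ) : EReal) := (EReal.coe_toReal hz (hbot z)).symm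
    simp only [proxCost, smulF, Matrix.one_mulVec] at h1
    rw [hT, hz', EReal.coe_mul_top_of_pos hc, EReal.coe_add_top, ← EReal.coe_mul,
      ← EReal.coe_add, top_le_iff] at h1
    exact EReal.coe_ne_top _ h1
  refine ⟨hfp, fun u => ?_⟩
  have hp' : f p = (((f p).toReal : ℝ) : EReal) := (EReal.coe_toReal hfp (hbot p)).symm
  set rp := (f p).toReal with hrp
  by_cases hu : f u = ⊤
  · rw [hp', hu, sub_eq_add_neg]
    simp only [EReal.neg_top, EReal.add_bot]
    exact bot_le
  · have hu' : f u = (((f u).toReal : ℝ) : EReal) := (EReal.coe_toReal hu (hbot u)).symm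
    set ru := (f u).toReal with hru
    rw [hp', hu', ← EReal.coe_sub, EReal.coe_le_coe_iff]
    -- key per-`t` inequality
    have key : ∀ t : ℝ, 0 < t → t < 1 →
        c * (rp - ru) ≤ (x - p) ⬝ᵥ (p - u) + t * ((u - p) ⬝ᵥ (u - p) / 2) := by
      intro t ht0 ht1
      set ut := t • u + (1 - t) • p with hut
      have hcv := hconv u p t ht0 ht1
      rw [hp', hu', ← EReal.coe_mul, ← EReal.coe_mul, ← EReal.coe_add] at hcv
      have hut_ne_top : f ut ≠ ⊤ := by
        intro h
        rw [h, top_le_iff] at hcv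
        exact EReal.coe_ne_top _ hcv
      have hut' : f ut = (((f ut).toReal : ℝ) : EReal) :=
        (EReal.coe_toReal hut_ne_top (hbot ut)).symm
      set rt := (f ut).toReal with hrtdef
      have hrt : rt ≤ t * ru + (1 - t) * rp := by
        rw [hut'] at hcv; exact_mod_cast hcv
      have hm := hmin ut
      simp only [proxCost, smulF, Matrix.one_mulVec] at hm
      rw [hp', hut', ← EReal.coe_mul, ← EReal.coe_mul, ← EReal.coe_add, ← EReal.coe_add,
        EReal.coe_le_coe_iff] at hm
      have hexp : (ut - x) ⬝ᵥ (ut - x) =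
          (p - x) ⬝ᵥ (p - x) + 2 * t * ((p - x) ⬝ᵥ (u - p)) + t ^ 2 * ((u - p) ⬝ᵥ (u - p)) := by
        have h1 : ut - x = (p - x) + t • (u - p) := by
          funext j
          simp only [hut, Pi.add_apply, Pi.sub_apply, Pi.smul_apply, smul_eq_mul]
          ring
        rw [h1]
        simp only [dotProduct_add, add_dotProduct, dotProduct_smul, smul_dotProduct,
          smul_eq_mul, dotProduct_comm (u - p) (p - x)]
        ring
      have hd : (x - p) ⬝ᵥ (p - u) = (p - x) ⬝ᵥ (u - p) := by
        rw [show x - p = -(p - x) from (neg_sub p x).symm,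
          show p - u = -(u - p) from (neg_sub u p).symm, neg_dotProduct, dotProduct_neg, neg_neg]
      rw [hexp] at hm
      rw [hd]
      have hcrt : c * rt ≤ c * (t * ru + (1 - t) * rp) :=
        mul_le_mul_of_nonneg_left hrt hc.le
      have h2 : t * (c * (rp - ru)) ≤ t * ((p - x) ⬝ᵥ (u - p) + t * ((u - p) ⬝ᵥ (u - p) / 2)) := by
        nlinarith [hm, hcrt]
      have := (mul_le_mul_iff_right₀ ht0).1 h2
      linarith
    have hb : c * (rp - ru) ≤ (x - p) ⬝ᵥ (p - u) := by
      apply real_le_of_forall_pos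
      intro ε hε
      set K := (u - p) ⬝ᵥ (u - p) / 2 with hK
      have hK0 : 0 ≤ K := by
        have := dot_self_nonneg' (u - p); positivity
      set t := min (1 / 2 : ℝ) (ε / (K + 1)) with ht
      have ht0 : 0 < t := lt_min (by norm_num) (div_pos hε (by linarith))
      have ht1 : t < 1 := lt_of_le_of_lt (min_le_left _ _) (by norm_num)
      have hkey := key t ht0 ht1
      have htK : t * K ≤ ε := by
        have h1 : t ≤ ε / (K + 1) := min_le_right _ _
        have h2 : t * K ≤ (ε / (K + 1)) * K := mul_le_mul_of_nonneg_right h1 hK0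
        have h3 : (ε / (K + 1)) * K ≤ ε := by
          rw [div_mul_eq_mul_div, div_le_iff₀ (by linarith)]
          nlinarith
        linarith
      linarith
    rw [inv_mul_eq_div, le_div_iff₀ hc]
    linarith

/-- for the scheme `v^{k+1} = T_ℳ(v^k, v^{k−1})`, one has for every `k ≥ 1`
and every `v` that `G(v^{k+1}, v) ≤ ⟨M₁v^k + M₂v^{k−1} − M₀v^{k+1}, v^{k+1} − v⟩`. -/
theorem scheme_G_bound {s m : ℕ} {n : Fin s → ℕ}
    (f : ∀ i : Fin s, (Fin (n i) → ℝ) → EReal)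
    (A : ∀ i : Fin s, Matrix (Fin m) (Fin (n i)) ℝ) (b : Fin m → ℝ)
    (hf : ∀ i, ProperConvexLsc (f i))
    (α : Fin s → ℝ) (hα : ∀ i, 0 < α i) (β : ℝ) (hβ : 0 < β)
    (M0 M1 M2 : Matrix (FIdx n m) (FIdx n m) ℝ)
    (hwd : TMWellDefined f A b α β M0 M1 M2)
    (v : ℕ → FIdx n m → ℝ)
    (hrec : ∀ k : ℕ, isTM f A b α β M0 M1 M2 (v (k + 1)) (v k) (v (k + 2))) :
    ∀ (k : ℕ) (w : FIdx n m → ℝ),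
      Gfun f A b (v (k + 2)) w ≤
        (((M1.mulVec (v (k + 1)) + M2.mulVec (v k) - M0.mulVec (v (k + 2))) ⬝ᵥ
          (v (k + 2) - w) : ℝ) : EReal) := by
  intro k w
  have hβ' : (β : ℝ) ≠ 0 := ne_of_gt hβ
  have hα' : ∀ i, (α i : ℝ) ≠ 0 := fun i => ne_of_gt (hα i)
  have hisT := hrec k
  unfold isTM at hisT
  set p : FIdx n m → ℝ := v (k + 2) with hpdef
  set z : FIdx n m → ℝ := (Emat A α β - Rinv α β * M0).mulVec p +
      (Rinv α β * M1).mulVec (v (k + 1)) + (Rinv α β * M2).mulVec (v k) with hzdef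
  unfold isT at hisT
  obtain ⟨hx, hy⟩ := hisT
  -- per-block prox inequalities
  have hkey : ∀ i, f i (blk (xpart p) i) ≠ ⊤ ∧
      ∀ u, f i (blk (xpart p) i) - f i u ≤
        (((α i / β)⁻¹ * ((blk (xpart z) i - blk (xpart p) i) ⬝ᵥ (blk (xpart p) i - u)) : ℝ) :
          EReal) := fun i =>
    prox_ineq (f i) (hf i).1 (hf i).2.1 (hf i).2.2.2 (α i / β) (div_pos (hα i) hβ) _ _ (hx i).1
  have hconvy : ∀ x y : Fin m → ℝ, ∀ t : ℝ, 0 < t → t < 1 →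
      iotaCstar b (t • x + (1 - t) • y) ≤
        (t : EReal) * iotaCstar b x + ((1 - t : ℝ) : EReal) * iotaCstar b y := by
    intro x y t _ _
    simp only [iotaCstar, ← EReal.coe_mul, ← EReal.coe_add, EReal.coe_le_coe_iff]
    rw [add_dotProduct, smul_dotProduct, smul_dotProduct]
    simp [smul_eq_mul]
  have hkeyy := prox_ineq (iotaCstar b) ⟨0, EReal.coe_ne_top _⟩ (fun _ => EReal.coe_ne_bot _)
    hconvy β hβ _ _ hy.1
  -- real values at p
  have hrp : ∀ i, f i (blk (xpart p) i) =
      (((f i (blk (xpart p) i)).toReal : ℝ) : EReal) := fun i =>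
    (EReal.coe_toReal (hkey i).1 ((hf i).2.1 _)).symm
  set rp : Fin s → ℝ := fun i => (f i (blk (xpart p) i)).toReal with hrpdef
  have hPhip : PhiFun f b p = ((∑ i, rp i + ypart p ⬝ᵥ b : ℝ) : EReal) := by
    rw [PhiFun, objSum, iotaCstar, EReal.coe_add, ecoe_sum]
    congr 1
    exact Finset.sum_congr rfl fun i _ => hrp i
  -- the main linear-algebra identity:  R (z - p) = S_A p + M1 v¹ + M2 v⁰ - M0 p
  have hRRinv : Rmat α β * Rinv α β = (1 : Matrix (FIdx n m) (FIdx n m) ℝ) := by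
    rw [Rmat, Rinv, Matrix.diagonal_mul_diagonal]
    ext q q'
    rw [Matrix.diagonal_apply, Matrix.one_apply]
    by_cases h : q = q'
    · simp only [h, if_true]
      cases q' with
      | inl a =>
        show β / α a.1 * (α a.1 / β) = 1
        rw [div_mul_div_comm, mul_comm β (α a.1)]
        exact div_self (mul_ne_zero (hα' a.1) hβ')
      | inr r =>
        show 1 / β * β = 1
        rw [one_div, inv_mul_cancel₀ hβ']
    · simp [h]
  have hRE : Rmat α β * Emat A α β = Rmat α β + SAmat A := by
    ext q q'
    rw [Rmat, Emat, SAmat, Matrix.diagonal_mul, Matrix.add_apply]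
    cases q with
    | inl a =>
      cases q' with
      | inl a' =>
        simp only [Sum.elim_inl, Matrix.fromBlocks_apply₁₁, Matrix.diagonal_apply,
          Matrix.one_apply]
        by_cases h : a = a' <;> simp [h]
      | inr r =>
        simp only [Sum.elim_inl, Matrix.fromBlocks_apply₁₂, Matrix.diagonal_apply,
          Matrix.neg_apply, reduceCtorEq, if_false, zero_add]
        rw [Matrix.diagonal_mul]
        simp only [Matrix.transpose_apply]
        field_simp [hα' a.1, hβ']
    | inr r =>
      cases q' with
      | inl a' =>
        simp only [Sum.elim_inr, Matrix.fromBlocks_apply₂₁, Matrix.diagonal_apply,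
          Matrix.smul_apply, smul_eq_mul, reduceCtorEq, if_false, zero_add]
        field_simp
      | inr r' =>
        simp only [Sum.elim_inr, Matrix.fromBlocks_apply₂₂, Matrix.diagonal_apply,
          Matrix.one_apply]
        by_cases h : r = r' <;> simp [h]
  have hRz : (Rmat α β).mulVec (z - p) = (SAmat A).mulVec p + M1.mulVec (v (k + 1)) +
      M2.mulVec (v k) - M0.mulVec p := by
    have hA : Rmat α β * (Emat A α β - Rinv α β * M0) = Rmat α β + SAmat A - M0 := by
      rw [Matrix.mul_sub, hRE, ← Matrix.mul_assoc, hRRinv, Matrix.one_mul]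
    have hB : Rmat α β * (Rinv α β * M1) = M1 := by
      rw [← Matrix.mul_assoc, hRRinv, Matrix.one_mul]
    have hC : Rmat α β * (Rinv α β * M2) = M2 := by
      rw [← Matrix.mul_assoc, hRRinv, Matrix.one_mul]
    rw [Matrix.mulVec_sub, hzdef, Matrix.mulVec_add, Matrix.mulVec_add,
      Matrix.mulVec_mulVec, Matrix.mulVec_mulVec, Matrix.mulVec_mulVec, hA, hB, hC]
    rw [Matrix.sub_mulVec, Matrix.add_mulVec]
    funext q
    simp only [Pi.add_apply, Pi.sub_apply]
    ring
  -- bridging the scaled block dot products with `R (z-p) ⬝ (p-w)`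
  have hbridge : ∑ i, (α i / β)⁻¹ *
        ((blk (xpart z) i - blk (xpart p) i) ⬝ᵥ (blk (xpart p) i - blk (xpart w) i)) +
        β⁻¹ * ((ypart z - ypart p) ⬝ᵥ (ypart p - ypart w)) =
      (Rmat α β).mulVec (z - p) ⬝ᵥ (p - w) := by
    conv_rhs => rw [dotProduct]
    rw [Fintype.sum_sum_type]
    congr 1
    · conv_rhs => rw [← Finset.univ_sigma_univ, Finset.sum_sigma]
      refine Finset.sum_congr rfl fun i _ => ?_
      rw [dotProduct, Finset.mul_sum]
      refine Finset.sum_congr rfl fun j _ => ?_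
      simp only [Rmat, Matrix.mulVec_diagonal, Sum.elim_inl, blk, xpart, Pi.sub_apply]
      field_simp [hα' i, hβ']
    · rw [dotProduct, Finset.mul_sum]
      refine Finset.sum_congr rfl fun r _ => ?_
      simp only [Rmat, Matrix.mulVec_diagonal, Sum.elim_inr, ypart, Pi.sub_apply]
      field_simp [hβ']
  -- skew-symmetry
  have hskewT : (SAmat A)ᵀ = -(SAmat A) := by
    ext q q'
    cases q with
    | inl a =>
      cases q' with
      | inl a' => simp [SAmat]
      | inr r => simp [SAmat]
    | inr r =>
      cases q' with
      | inl a' => simp [SAmat]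
      | inr r' => simp [SAmat]
  have hself : (SAmat A).mulVec p ⬝ᵥ p = 0 := by
    have h1 : (SAmat A).mulVec p ⬝ᵥ p = p ⬝ᵥ (SAmat A).mulVec p := dotProduct_comm _ _
    have h2 : p ⬝ᵥ (SAmat A).mulVec p = ((SAmat A)ᵀ.mulVec p) ⬝ᵥ p := by
      rw [Matrix.dotProduct_mulVec, ← Matrix.mulVec_transpose]
    rw [hskewT, Matrix.neg_mulVec, neg_dotProduct] at h2
    linarith [h1.trans h2]
  have hskew : (SAmat A).mulVec p ⬝ᵥ (p - w) = -(w ⬝ᵥ (SAmat A).mulVec p) := by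
    rw [dotProduct_sub, hself, dotProduct_comm]
    ring
  -- case split on whether Φ(w) is +∞
  by_cases hT : ∃ i, f i (blk (xpart w) i) = ⊤
  · obtain ⟨i0, hi0⟩ := hT
    have hsum_top : objSum f (xpart w) = ⊤ := by
      rw [objSum]
      exact ereal_sum_eq_top _ _ (fun i _ => (hf i).2.1 _) i0 (Finset.mem_univ _) hi0
    have hPw : PhiFun f b w = ⊤ := by
      rw [PhiFun, hsum_top, iotaCstar]; exact EReal.top_add_coe _
    rw [Gfun, hPhip, hPw, sub_eq_add_neg]
    simp only [EReal.neg_top, EReal.add_bot, EReal.bot_add]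
    exact bot_le
  · push_neg at hT
    have hru : ∀ i, f i (blk (xpart w) i) =
        (((f i (blk (xpart w) i)).toReal : ℝ) : EReal) := fun i =>
      (EReal.coe_toReal (hT i) ((hf i).2.1 _)).symm
    set ru : Fin s → ℝ := fun i => (f i (blk (xpart w) i)).toReal with hrudef
    have hPhiw : PhiFun f b w = ((∑ i, ru i + ypart w ⬝ᵥ b : ℝ) : EReal) := by
      rw [PhiFun, objSum, iotaCstar, EReal.coe_add, ecoe_sum]
      congr 1
      exact Finset.sum_congr rfl fun i _ => hru i
    rw [Gfun, hPhip, hPhiw, ← EReal.coe_sub, ← EReal.coe_add, EReal.coe_le_coe_iff]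
    -- real inequalities
    have hblock : ∀ i, rp i - ru i ≤ (α i / β)⁻¹ *
        ((blk (xpart z) i - blk (xpart p) i) ⬝ᵥ (blk (xpart p) i - blk (xpart w) i)) := by
      intro i
      have h := (hkey i).2 (blk (xpart w) i)
      rw [hrp i, hru i, ← EReal.coe_sub, EReal.coe_le_coe_iff] at h
      exact h
    have hyineq : ypart p ⬝ᵥ b - ypart w ⬝ᵥ b ≤
        β⁻¹ * ((ypart z - ypart p) ⬝ᵥ (ypart p - ypart w)) := by
      have h := hkeyy.2 (ypart w)
      simp only [iotaCstar, ← EReal.coe_sub, EReal.coe_le_coe_iff] at h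
      exact h
    have hsum : ∑ i, (rp i - ru i) ≤ ∑ i, (α i / β)⁻¹ *
        ((blk (xpart z) i - blk (xpart p) i) ⬝ᵥ (blk (xpart p) i - blk (xpart w) i)) :=
      Finset.sum_le_sum fun i _ => hblock i
    have hsplit : (Rmat α β).mulVec (z - p) ⬝ᵥ (p - w) =
        (SAmat A).mulVec p ⬝ᵥ (p - w) +
        (M1.mulVec (v (k + 1)) + M2.mulVec (v k) - M0.mulVec p) ⬝ᵥ (p - w) := by
      rw [hRz, show (SAmat A).mulVec p + M1.mulVec (v (k + 1)) + M2.mulVec (v k) -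
          M0.mulVec p = (SAmat A).mulVec p +
          (M1.mulVec (v (k + 1)) + M2.mulVec (v k) - M0.mulVec p) by
        funext q; simp only [Pi.add_apply, Pi.sub_apply]; ring]
      rw [add_dotProduct]
    have hsumsub : ∑ i, (rp i - ru i) = ∑ i, rp i - ∑ i, ru i := Finset.sum_sub_distrib _ _
    have hfinal := hbridge
    rw [hsplit, hskew] at hfinal
    linarith [hsum, hyineq, hfinal]

end
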